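/- Let X be a Banach space and (x_n) a sequence in X with ‖x_n‖ → 0. Then the closed convex hull of {x_n : n ∈ ℕ} is contained in the set { Σ_{n=1}^∞ α_n x_n : (α_n) scalars with Σ_{n=1}^∞ |α_n| ≤ 1 } (all such series converging in norm). -/

import Mathlib

open Filter

private lemma mem_convexHull_repr {X : Type*} [NormedAddCommGroup X] [NormedSpace ℝ X]
    (x : ℕ → X) {c : X} (hc : c ∈ convexHull ℝ (Set.range x)) :
    ∃ β : ℕ → ℝ, (∀ n, 0 ≤ β n) ∧ (∃ s : Finset ℕ, ∀ n ∉ s, β n = 0) ∧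
      HasSum β 1 ∧ HasSum (fun n => β n • x n) c := by
  classical
  rw [convexHull_eq] at hc
  obtain ⟨ι, t, w, z, hw0, hw1, hz, hcm⟩ := hc
  have hcc : ∑ i ∈ t, w i • z i = c := by
    rw [← Finset.centerMass_eq_of_sum_1 t z hw1]; exact hcm
  have hzx : ∀ i ∈ t, ∃ m : ℕ, x m = z i := fun i hi => hz i hi
  choose g hg using hzx
  set G : ι → ℕ := fun i => if h : i ∈ t then g i h else 0 with hG
  have hGz : ∀ i ∈ t, x (G i) = z i := by
    intro i hi; simp only [hG, dif_pos hi]; exact hg i hi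
  set β : ℕ → ℝ := fun m => ∑ i ∈ t.filter (fun i => G i = m), w i with hβ
  have hβ0 : ∀ n, 0 ≤ β n := by
    intro n
    exact Finset.sum_nonneg fun i hi => hw0 i (Finset.mem_of_mem_filter i hi)
  have hsupp : ∀ n ∉ t.image G, β n = 0 := by
    intro n hn
    apply Finset.sum_eq_zero
    intro i hi
    obtain ⟨hit, hGi⟩ := Finset.mem_filter.mp hi
    exact absurd (hGi ▸ Finset.mem_image_of_mem G hit) hn
  refine ⟨β, hβ0, ⟨t.image G, hsupp⟩, ?_, ?_⟩
  · have h1 : HasSum β (∑ m ∈ t.image G, β m) := hasSum_sum_of_ne_finset_zero hsupp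
    have h2 : ∑ m ∈ t.image G, β m = ∑ i ∈ t, w i := by
      exact Finset.sum_fiberwise_of_maps_to (fun i hi => Finset.mem_image_of_mem G hi) w
    rwa [h2, hw1] at h1
  · have h1 : HasSum (fun n => β n • x n) (∑ m ∈ t.image G, β m • x m) :=
      hasSum_sum_of_ne_finset_zero (fun n hn => by rw [hsupp n hn, zero_smul])
    have h2 : ∑ m ∈ t.image G, β m • x m = ∑ i ∈ t, w i • z i := by
      rw [← Finset.sum_fiberwise_of_maps_to (fun i hi => Finset.mem_image_of_mem G hi)
        (fun i => w i • z i)]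
      refine Finset.sum_congr rfl fun m _ => ?_
      rw [hβ, Finset.sum_smul]
      refine Finset.sum_congr rfl fun i hi => ?_
      obtain ⟨hit, hGi⟩ := Finset.mem_filter.mp hi
      rw [← hGz i hit, hGi]
    rwa [h2, hcc] at h1

set_option maxHeartbeats 1000000 in
private lemma norm_est {X : Type*} [NormedAddCommGroup X] [NormedSpace ℝ X]
    (x : ℕ → X) (M ε : ℝ) (N : ℕ) (hε0 : 0 ≤ ε) (hM : ∀ n, ‖x n‖ ≤ M)
    (hεn : ∀ n, N ≤ n → ‖x n‖ ≤ ε) (γ : ℕ → ℝ)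
    (hγ : Summable fun n => |γ n|) (hγ2 : (∑' n, |γ n|) ≤ 2)
    {w : X} (hw : HasSum (fun n => γ n • x n) w) :
    ‖w‖ ≤ M * (∑ n ∈ Finset.range N, |γ n|) + 2 * ε := by
  have hnorm : ∀ n, ‖γ n • x n‖ = |γ n| * ‖x n‖ := fun n => by
    rw [norm_smul, Real.norm_eq_abs]
  have hsum : Summable fun n => ‖γ n • x n‖ := by
    refine Summable.of_nonneg_of_le (fun n => norm_nonneg _) (fun n => ?_) (hγ.mul_right M)
    rw [hnorm]; exact mul_le_mul_of_nonneg_left (hM n) (abs_nonneg _)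
  have h1 : ‖w‖ ≤ ∑' n, ‖γ n • x n‖ := by
    rw [← hw.tsum_eq]; exact norm_tsum_le_tsum_norm hsum
  have hsplit := Summable.sum_add_tsum_nat_add N hsum
  have hhead : ∑ n ∈ Finset.range N, ‖γ n • x n‖ ≤ M * ∑ n ∈ Finset.range N, |γ n| := by
    rw [Finset.mul_sum]
    refine Finset.sum_le_sum fun n _ => ?_
    rw [hnorm, mul_comm (M) _]
    exact mul_le_mul_of_nonneg_left (hM n) (abs_nonneg _)
  have htail1 : Summable fun n => |γ (n + N)| := by
    exact (summable_nat_add_iff N).mpr hγ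
  have htail0 : (∑' n, |γ (n + N)|) ≤ 2 := by
    have := Summable.sum_add_tsum_nat_add N hγ
    have hh : 0 ≤ ∑ n ∈ Finset.range N, |γ n| :=
      Finset.sum_nonneg fun n _ => abs_nonneg _
    linarith
  have htail : (∑' n, ‖γ (n + N) • x (n + N)‖) ≤ 2 * ε := by
    have h2 : (∑' n, ‖γ (n + N) • x (n + N)‖) ≤ ∑' n, |γ (n + N)| * ε := by
      refine Summable.tsum_le_tsum (fun n => ?_) ((summable_nat_add_iff N).mpr hsum)
        (htail1.mul_right ε)
      rw [hnorm]
      exact mul_le_mul_of_nonneg_left (hεn _ (Nat.le_add_left N n)) (abs_nonneg _)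
    rw [tsum_mul_right] at h2
    calc (∑' n, ‖γ (n + N) • x (n + N)‖) ≤ (∑' n, |γ (n + N)|) * ε := h2
      _ ≤ 2 * ε := mul_le_mul_of_nonneg_right htail0 hε0
  linarith

private lemma aux_real {X : Type*} [NormedAddCommGroup X] [NormedSpace ℝ X] [CompleteSpace X]
    (x : ℕ → X) (hx : Tendsto (fun n => ‖x n‖) atTop (nhds 0)) {y : X}
    (hy : y ∈ closure (convexHull ℝ (Set.range x))) :
    ∃ α : ℕ → ℝ, (∀ n, 0 ≤ α n) ∧ Summable α ∧ (∑' n, α n) ≤ 1 ∧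
      HasSum (fun n => α n • x n) y := by
  obtain ⟨M, hMmem⟩ := hx.bddAbove_range
  have hM : ∀ n, ‖x n‖ ≤ M := fun n => hMmem (Set.mem_range_self n)
  have hM0 : 0 ≤ M := le_trans (norm_nonneg (x 0)) (hM 0)
  obtain ⟨c, hc, hcy⟩ := mem_closure_iff_seq_limit.mp hy
  choose β hβ0 hβs hβ1 hβx using fun k => mem_convexHull_repr x (hc k)
  have hβ01 : ∀ k n, β k n ∈ Set.Icc (0:ℝ) 1 := fun k n =>
    ⟨hβ0 k n, le_hasSum (hβ1 k) n fun j _ => hβ0 k j⟩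
  have hcomp : IsCompact (Set.pi Set.univ fun _ : ℕ => Set.Icc (0:ℝ) 1) :=
    isCompact_univ_pi fun _ => isCompact_Icc
  obtain ⟨α, hαmem, φ, hφ, hconv⟩ :=
    hcomp.tendsto_subseq (x := fun k => β k) (fun k => by
      intro n _; exact hβ01 k n)
  have hpt : ∀ n, Tendsto (fun j => β (φ j) n) atTop (nhds (α n)) :=
    tendsto_pi_nhds.mp hconv
  have hα0 : ∀ n, 0 ≤ α n := fun n => (hαmem n (Set.mem_univ n)).1
  have hsum_le : ∀ F : Finset ℕ, ∑ n ∈ F, α n ≤ 1 := by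
    intro F
    refine le_of_tendsto (tendsto_finset_sum F fun n _ => hpt n) ?_
    exact Eventually.of_forall fun j =>
      sum_le_hasSum F (fun i _ => hβ0 (φ j) i) (hβ1 (φ j))
  have hαsum : Summable α := summable_of_sum_le hα0 hsum_le
  have hαle1 : (∑' n, α n) ≤ 1 := hαsum.tsum_le_of_sum_le hsum_le
  have hαxsum : Summable fun n => α n • x n := by
    refine Summable.of_norm_bounded (hαsum.mul_right M) fun n => ?_
    rw [norm_smul, Real.norm_eq_abs, abs_of_nonneg (hα0 n)]
    exact mul_le_mul_of_nonneg_left (hM n) (hα0 n)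
  set z := ∑' n, α n • x n with hzdef
  have hz : HasSum (fun n => α n • x n) z := hαxsum.hasSum
  -- summability facts for each k
  have hβksum : ∀ k, Summable (β k) := fun k => (hβ1 k).summable
  have hγsum : ∀ k, Summable fun n => |β k n - α n| := fun k =>
    ((hβksum k).sub hαsum).abs
  have hγ2 : ∀ k, (∑' n, |β k n - α n|) ≤ 2 := by
    intro k
    have h1 : (∑' n, |β k n - α n|) ≤ ∑' n, (β k n + α n) := by
      refine Summable.tsum_le_tsum (fun n => ?_) (hγsum k) ((hβksum k).add hαsum)
      calc |β k n - α n| ≤ |β k n| + |α n| := abs_sub _ _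
        _ = β k n + α n := by rw [abs_of_nonneg (hβ0 k n), abs_of_nonneg (hα0 n)]
    have h2 : (∑' n, (β k n + α n)) = 1 + ∑' n, α n := by
      rw [Summable.tsum_add (hβksum k) hαsum, (hβ1 k).tsum_eq]
    linarith
  have hdiff : ∀ k, HasSum (fun n => (β k n - α n) • x n) (c k - z) := by
    intro k
    simpa [sub_smul] using (hβx k).sub hz
  -- show Tendsto (c ∘ φ) atTop (𝓝 z)
  have hconv2 : Tendsto (fun j => c (φ j)) atTop (nhds z) := by
    rw [Metric.tendsto_atTop]
    intro ε hε
    have hε6 : (0:ℝ) < ε / 6 := by positivity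
    obtain ⟨N, hN⟩ := (eventually_atTop.mp (hx.eventually (gt_mem_nhds hε6)))
    have hhead : Tendsto (fun j => ∑ n ∈ Finset.range N, |β (φ j) n - α n|)
        atTop (nhds 0) := by
      have := tendsto_finset_sum (Finset.range N)
        (f := fun n j => |β (φ j) n - α n|) (a := fun n => |α n - α n|)
        (fun n _ => ((hpt n).sub tendsto_const_nhds).abs)
      simpa using this
    have hδ : (0:ℝ) < ε / (3 * (M + 1)) := by positivity
    obtain ⟨J, hJ⟩ := eventually_atTop.mp (hhead.eventually (gt_mem_nhds hδ))
    refine ⟨J, fun j hj => ?_⟩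
    rw [dist_eq_norm]
    have hest := norm_est x M (ε / 6) N (le_of_lt hε6) hM
      (fun n hn => le_of_lt (hN n hn)) (fun n => β (φ j) n - α n)
      (hγsum (φ j)) (hγ2 (φ j)) (hdiff (φ j))
    have hS0 : 0 ≤ ∑ n ∈ Finset.range N, |β (φ j) n - α n| :=
      Finset.sum_nonneg fun n _ => abs_nonneg _
    have hSlt := hJ j hj
    have hMS : M * (∑ n ∈ Finset.range N, |β (φ j) n - α n|) < ε / 3 := by
      calc M * (∑ n ∈ Finset.range N, |β (φ j) n - α n|)
          ≤ (M + 1) * (∑ n ∈ Finset.range N, |β (φ j) n - α n|) := by nlinarith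
        _ < (M + 1) * (ε / (3 * (M + 1))) := by
            exact mul_lt_mul_of_pos_left hSlt (by linarith)
        _ = ε / 3 := by field_simp
    calc ‖c (φ j) - z‖ ≤ M * (∑ n ∈ Finset.range N, |β (φ j) n - α n|) + 2 * (ε / 6) :=
          hest
      _ < ε / 3 + ε / 3 := by linarith
      _ < ε := by linarith
  have hyz : y = z :=
    tendsto_nhds_unique (hcy.comp hφ.tendsto_atTop) hconv2
  exact ⟨α, hα0, hαsum, hαle1, hyz ▸ hz⟩

/-- If `(xₙ)` is a null sequence in a Banach space `X` (over `ℝ` or `ℂ`), then the closed convex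
hull of `{xₙ : n ∈ ℕ}` is contained in the set of all sums `Σₙ αₙ xₙ` with scalars `(αₙ)`
satisfying `Σₙ |αₙ| ≤ 1`. -/
theorem closedConvexHull_subset_sums {𝕜 X : Type*} [RCLike 𝕜]
    [NormedAddCommGroup X] [NormedSpace ℝ X] [NormedSpace 𝕜 X] [IsScalarTower ℝ 𝕜 X]
    [CompleteSpace X]
    (x : ℕ → X) (hx : Tendsto (fun n => ‖x n‖) atTop (nhds 0)) :
    closure (convexHull ℝ (Set.range x)) ⊆
      { y : X | ∃ α : ℕ → 𝕜,
          Summable (fun n => ‖α n‖) ∧ (∑' n, ‖α n‖) ≤ 1 ∧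
          HasSum (fun n => α n • x n) y } := by
  intro y hy
  obtain ⟨α, hα0, hαsum, hαle1, hαx⟩ := aux_real x hx hy
  refine ⟨fun n => algebraMap ℝ 𝕜 (α n), ?_, ?_, ?_⟩
  · have : (fun n => ‖algebraMap ℝ 𝕜 (α n)‖) = fun n => α n := by
      funext n
      rw [RCLike.algebraMap_eq_ofReal, RCLike.norm_ofReal, abs_of_nonneg (hα0 n)]
    rw [this]; exact hαsum
  · have : (fun n => ‖algebraMap ℝ 𝕜 (α n)‖) = fun n => α n := by
      funext n
      rw [RCLike.algebraMap_eq_ofReal, RCLike.norm_ofReal, abs_of_nonneg (hα0 n)]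
    rw [this]; exact hαle1
  · have : (fun n => algebraMap ℝ 𝕜 (α n) • x n) = fun n => α n • x n := by
      funext n; rw [algebraMap_smul]
    rw [this]; exact hαx
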